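/- arXiv:2002.00678 — 4 statements merged into one kernel-verified Lean document; each statement's English description precedes it below -/
import Mathlib

section
/- Let F be a field of characteristic zero, J an infinite set, and I ⊆ J a finite subset with at least two elements. Let p : V → V be the F-linear projection with p e_j = e_j for j ∈ I and p e_j = 0 for j ∉ I, and set sl_I(F) = {f ∈ sl_J(F) : p ∘ f ∘ p = f}, a Lie subalgebra of sl_J(F). If Δ is a local derivation of sl_J(F), then for every x ∈ sl_I(F) the element p ∘ (Δ x) ∘ p lies in sl_I(F), and the map sl_I(F) → sl_I(F) given by x ↦ p ∘ (Δ x) ∘ p is a local derivation of sl_I(F). -/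
set_option maxHeartbeats 1000000
set_option synthInstance.maxHeartbeats 1000000

attribute [local instance 100] LieRing.ofAssociativeRing

/-- An `F`-linear endomorphism `f` of `ι →₀ F` is *finitary* if the set of pairs `(i, j)`
with `(f eⱼ) i ≠ 0` (where `eⱼ = single j 1` are the standard basis vectors) is finite. -/
def Finitary (F : Type*) [Field F] {ι : Type*} (f : Module.End F (ι →₀ F)) : Prop :=
  {p : ι × ι | f (Finsupp.single p.2 1) p.1 ≠ 0}.Finite

/-- The trace of a (finitary) endomorphism of `ι →₀ F`. -/
noncomputable def trF (F : Type*) [Field F] {ι : Type*} (f : Module.End F (ι →₀ F)) : F :=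
  ∑ᶠ j, f (Finsupp.single j 1) j

section SL

variable {F : Type*} [Field F] {ι : Type*}

lemma end_apply_eq_sum (f : Module.End F (ι →₀ F)) (v : ι →₀ F) :
    f v = ∑ i ∈ v.support, v i • f (Finsupp.single i 1) := by
  conv_lhs => rw [← Finsupp.sum_single v, Finsupp.sum, map_sum]
  exact Finset.sum_congr rfl fun i _ => by rw [← Finsupp.smul_single_one, map_smul]

lemma column_eq_zero {f : Module.End F (ι →₀ F)} {j : ι}
    (h : ∀ i, f (Finsupp.single j 1) i = 0) : f (Finsupp.single j 1) = 0 := by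
  ext i; simpa using h i

namespace Finitary

variable {f g : Module.End F (ι →₀ F)}

lemma add (hf : Finitary F f) (hg : Finitary F g) : Finitary F (f + g) := by
  refine (hf.union hg).subset fun p hp => ?_
  by_contra h
  try push_neg at h
  simp only [Set.mem_union, Set.mem_setOf_eq, not_or, not_not] at h
  exact hp (by simp [LinearMap.add_apply, Finsupp.add_apply, h.1, h.2])

lemma zero : Finitary F (0 : Module.End F (ι →₀ F)) := by
  have h : {p : ι × ι | (0 : Module.End F (ι →₀ F)) (Finsupp.single p.2 1) p.1 ≠ 0} = ∅ := by
    ext p; simp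
  unfold Finitary
  rw [h]
  exact Set.finite_empty

lemma smul (c : F) (hf : Finitary F f) : Finitary F (c • f) := by
  refine hf.subset fun p hp => ?_
  simp only [Set.mem_setOf_eq, LinearMap.smul_apply, Finsupp.smul_apply] at hp ⊢
  intro h
  exact hp (by simp [h])

lemma neg (hf : Finitary F f) : Finitary F (-f) := by
  refine hf.subset fun p hp => ?_
  simp only [Set.mem_setOf_eq, LinearMap.neg_apply, Finsupp.neg_apply, neg_ne_zero] at hp ⊢
  exact hp

lemma sub (hf : Finitary F f) (hg : Finitary F g) : Finitary F (f - g) := by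
  have h : f - g = f + -g := sub_eq_add_neg f g
  rw [h]
  exact hf.add hg.neg

lemma mul (hf : Finitary F f) (hg : Finitary F g) : Finitary F (f * g) := by
  refine ((hf.image Prod.fst).prod (hg.image Prod.snd)).subset ?_
  rintro ⟨k, l⟩ hkl
  simp only [Set.mem_setOf_eq, Module.End.mul_apply] at hkl
  constructor
  · -- k ∈ Prod.fst '' S_f
    by_contra hk
    apply hkl
    rw [end_apply_eq_sum f (g (Finsupp.single l 1)), Finset.sum_apply']
    refine Finset.sum_eq_zero fun i _ => ?_
    have : f (Finsupp.single i 1) k = 0 := by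
      by_contra h
      exact hk ⟨(k, i), h, rfl⟩
    simp [this]
  · -- l ∈ Prod.snd '' S_g
    by_contra hl
    apply hkl
    have : g (Finsupp.single l 1) = 0 := by
      refine column_eq_zero fun i => ?_
      by_contra h
      exact hl ⟨(i, l), h, rfl⟩
    rw [this, map_zero]
    simp

end Finitary

lemma trace_support_finite {f : Module.End F (ι →₀ F)} (hf : Finitary F f) :
    (Function.support fun j => f (Finsupp.single j 1) j).Finite :=
  (hf.image Prod.fst).subset fun j hj => ⟨(j, j), hj, rfl⟩

lemma trF_add {f g : Module.End F (ι →₀ F)} (hf : Finitary F f) (hg : Finitary F g) :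
    trF F (f + g) = trF F f + trF F g := by
  unfold trF
  rw [← finsum_add_distrib (trace_support_finite hf) (trace_support_finite hg)]
  simp [LinearMap.add_apply]

lemma trF_zero : trF F (0 : Module.End F (ι →₀ F)) = 0 := by
  unfold trF; simp

lemma trF_neg (f : Module.End F (ι →₀ F)) : trF F (-f) = -trF F f := by
  unfold trF
  rw [← finsum_neg_distrib]
  simp

lemma trF_sub {f g : Module.End F (ι →₀ F)} (hf : Finitary F f) (hg : Finitary F g) :
    trF F (f - g) = trF F f - trF F g := by
  have h2 : f - g = f + -g := sub_eq_add_neg f g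
  have h := trF_add hf hg.neg
  rw [trF_neg] at h
  rw [h2, h, sub_eq_add_neg]

lemma trF_smul (c : F) (f : Module.End F (ι →₀ F)) : trF F (c • f) = c * trF F f := by
  unfold trF
  rcases (Function.support fun j => f (Finsupp.single j 1) j).finite_or_infinite with h | h
  · rw [mul_finsum _ _]; simp
  · by_cases hc : c = 0
    · simp [hc]
    · have h2 : (Function.support fun j => (c • f) (Finsupp.single j 1) j).Infinite := by
        refine h.mono fun j hj => ?_
        simp only [Function.mem_support, LinearMap.smul_apply, Finsupp.smul_apply,
          smul_eq_mul] at hj ⊢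
        exact mul_ne_zero hc hj
      rw [finsum_of_infinite_support h, finsum_of_infinite_support h2, mul_zero]

end SL

section SL2

variable {F : Type*} [Field F] {ι : Type*}

lemma entry_formula {g : Module.End F (ι →₀ F)}
    (f : Module.End F (ι →₀ F)) (T : Finset ι)
    (hT : ∀ p : ι × ι, g (Finsupp.single p.2 1) p.1 ≠ 0 → p.1 ∈ T)
    (j k : ι) :
    (f * g) (Finsupp.single j 1) k = ∑ i ∈ T, g (Finsupp.single j 1) i * f (Finsupp.single i 1) k := by
  classical
  rw [Module.End.mul_apply, end_apply_eq_sum f (g (Finsupp.single j 1)), Finset.sum_apply']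
  rw [Finset.sum_subset (fun i hi => hT (i, j) (Finsupp.mem_support_iff.mp hi))]
  · exact Finset.sum_congr rfl fun i _ => by simp [smul_eq_mul]
  · intro i _ hi
    rw [Finsupp.notMem_support_iff.mp hi]
    simp

lemma trF_mul_comm {f g : Module.End F (ι →₀ F)} (hf : Finitary F f) (hg : Finitary F g) :
    trF F (f * g) = trF F (g * f) := by
  classical
  obtain ⟨T, hfT, hgT⟩ :
      ∃ T : Finset ι,
        (∀ p : ι × ι, f (Finsupp.single p.2 1) p.1 ≠ 0 → p.1 ∈ T ∧ p.2 ∈ T) ∧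
        (∀ p : ι × ι, g (Finsupp.single p.2 1) p.1 ≠ 0 → p.1 ∈ T ∧ p.2 ∈ T) := by
    refine ⟨(hf.toFinset ∪ hg.toFinset).biUnion fun p => {p.1, p.2}, fun p hp => ?_, fun p hp => ?_⟩
    · have hmem : p ∈ hf.toFinset ∪ hg.toFinset :=
        Finset.mem_union_left _ (hf.mem_toFinset.mpr hp)
      exact ⟨Finset.mem_biUnion.mpr ⟨p, hmem, by simp⟩, Finset.mem_biUnion.mpr ⟨p, hmem, by simp⟩⟩
    · have hmem : p ∈ hf.toFinset ∪ hg.toFinset :=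
        Finset.mem_union_right _ (hg.mem_toFinset.mpr hp)
      exact ⟨Finset.mem_biUnion.mpr ⟨p, hmem, by simp⟩, Finset.mem_biUnion.mpr ⟨p, hmem, by simp⟩⟩
  -- columns outside T vanish
  have hgcol : ∀ j, j ∉ T → g (Finsupp.single j 1) = 0 := fun j hj =>
    column_eq_zero fun i => by
      by_contra h
      exact hj ((hgT (i, j) h).2)
  have hfcol : ∀ j, j ∉ T → f (Finsupp.single j 1) = 0 := fun j hj =>
    column_eq_zero fun i => by
      by_contra h
      exact hj ((hfT (i, j) h).2)
  have hsupfg : (Function.support fun j => (f * g) (Finsupp.single j 1) j) ⊆ (T : Set ι) := by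
    intro j hj
    by_contra hjT
    apply hj
    simp [Module.End.mul_apply, hgcol j hjT]
  have hsupgf : (Function.support fun j => (g * f) (Finsupp.single j 1) j) ⊆ (T : Set ι) := by
    intro j hj
    by_contra hjT
    apply hj
    simp [Module.End.mul_apply, hfcol j hjT]
  rw [trF, trF, finsum_eq_finset_sum_of_support_subset _ hsupfg,
    finsum_eq_finset_sum_of_support_subset _ hsupgf]
  calc ∑ j ∈ T, (f * g) (Finsupp.single j 1) j
      = ∑ j ∈ T, ∑ i ∈ T, g (Finsupp.single j 1) i * f (Finsupp.single i 1) j :=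
        Finset.sum_congr rfl fun j _ => entry_formula f T (fun p hp => (hgT p hp).1) j j
    _ = ∑ i ∈ T, ∑ j ∈ T, g (Finsupp.single j 1) i * f (Finsupp.single i 1) j := Finset.sum_comm
    _ = ∑ i ∈ T, ∑ j ∈ T, f (Finsupp.single i 1) j * g (Finsupp.single j 1) i :=
        Finset.sum_congr rfl fun i _ => Finset.sum_congr rfl fun j _ => mul_comm _ _
    _ = ∑ i ∈ T, (g * f) (Finsupp.single i 1) i :=
        Finset.sum_congr rfl fun i _ => (entry_formula g T (fun p hp => (hfT p hp).1) i i).symm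

/-- The Lie algebra `sl_J(F)` of finitary trace-zero endomorphisms of `J →₀ F`. -/
def slJ (F : Type*) [Field F] (J : Type*) : LieSubalgebra F (Module.End F (J →₀ F)) where
  carrier := {f | Finitary F f ∧ trF F f = 0}
  add_mem' := fun {a b} ha hb => ⟨ha.1.add hb.1, by rw [trF_add ha.1 hb.1, ha.2, hb.2, add_zero]⟩
  zero_mem' := ⟨Finitary.zero, trF_zero⟩
  smul_mem' := fun c x hx => ⟨hx.1.smul c, by rw [trF_smul, hx.2, mul_zero]⟩
  lie_mem' := fun {x y} hx hy => by
    have hxy : ⁅x, y⁆ = x * y - y * x := Ring.lie_def x y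
    refine ⟨?_, ?_⟩
    · rw [Set.mem_setOf_eq] at *
      rw [hxy]
      exact (hx.1.mul hy.1).sub (hy.1.mul hx.1)
    · rw [hxy, trF_sub (hx.1.mul hy.1) (hy.1.mul hx.1), trF_mul_comm hx.1 hy.1, sub_self]

end SL2

section SLI

variable {F : Type*} [Field F] {J : Type*}

lemma proj_idempotent (I : Set J) (p : Module.End F (J →₀ F))
    (hpI : ∀ j ∈ I, p (Finsupp.single j 1) = Finsupp.single j 1)
    (hpI' : ∀ j ∉ I, p (Finsupp.single j 1) = 0) : p * p = p := by
  refine Finsupp.lhom_ext fun a b => ?_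
  have hb : Finsupp.single a b = b • Finsupp.single a 1 := (Finsupp.smul_single_one a b).symm
  rw [hb, map_smul, map_smul]
  congr 1
  by_cases ha : a ∈ I
  · rw [Module.End.mul_apply, hpI a ha, hpI a ha]
  · rw [Module.End.mul_apply, hpI' a ha, map_zero]

lemma proj_mul_proj {R : Type*} [Ring R] {p x y : R} (hp : p * p = p)
    (hx : p * x * p = x) (hy : p * y * p = y) : p * (x * y) * p = x * y := by
  have hpx : p * x = x := by
    conv_lhs => rw [← hx]
    rw [← mul_assoc, ← mul_assoc, hp, hx]
  have hyp : y * p = y := by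
    conv_lhs => rw [← hy]
    rw [mul_assoc, hp, hy]
  calc p * (x * y) * p = ((p * x) * y) * p := by rw [← mul_assoc]
    _ = (x * y) * p := by rw [hpx]
    _ = x * (y * p) := by rw [mul_assoc]
    _ = x * y := by rw [hyp]

lemma proj_lie_proj {R : Type*} [Ring R] {p x y : R} (hp : p * p = p)
    (hx : p * x * p = x) (hy : p * y * p = y) : p * ⁅x, y⁆ * p = ⁅x, y⁆ := by
  rw [Ring.lie_def, mul_sub, sub_mul, proj_mul_proj hp hx hy, proj_mul_proj hp hy hx]

/-- The Lie subalgebra `sl_I(F) = {f ∈ sl_J(F) : p ∘ f ∘ p = f}` of `sl_J(F)`,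
where `p` is the projection onto the coordinates in `I`. -/
def slI (F : Type*) [Field F] {J : Type*} (I : Set J) (p : Module.End F (J →₀ F))
    (hpI : ∀ j ∈ I, p (Finsupp.single j 1) = Finsupp.single j 1)
    (hpI' : ∀ j ∉ I, p (Finsupp.single j 1) = 0) :
    LieSubalgebra F (Module.End F (J →₀ F)) where
  carrier := {f | f ∈ slJ F J ∧ p * f * p = f}
  add_mem' := fun {a b} ha hb =>
    ⟨(slJ F J).add_mem ha.1 hb.1, by rw [mul_add, add_mul, ha.2, hb.2]⟩
  zero_mem' := ⟨(slJ F J).zero_mem, by rw [mul_zero, zero_mul]⟩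
  smul_mem' := fun c x hx =>
    ⟨(slJ F J).smul_mem c hx.1, by rw [mul_smul_comm, smul_mul_assoc, hx.2]⟩
  lie_mem' := fun {x y} hx hy =>
    ⟨(slJ F J).lie_mem hx.1 hy.1,
      proj_lie_proj (proj_idempotent I p hpI hpI') hx.2 hy.2⟩

lemma mem_slI_iff (I : Set J) (p : Module.End F (J →₀ F))
    (hpI : ∀ j ∈ I, p (Finsupp.single j 1) = Finsupp.single j 1)
    (hpI' : ∀ j ∉ I, p (Finsupp.single j 1) = 0) (f : Module.End F (J →₀ F)) :
    f ∈ slI F I p hpI hpI' ↔ f ∈ slJ F J ∧ p * f * p = f := Iff.rfl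

/-- The inclusion of `sl_I(F)` into `sl_J(F)`. -/
def slItoslJ (F : Type*) [Field F] {J : Type*} (I : Set J) (p : Module.End F (J →₀ F))
    (hpI : ∀ j ∈ I, p (Finsupp.single j 1) = Finsupp.single j 1)
    (hpI' : ∀ j ∉ I, p (Finsupp.single j 1) = 0)
    (x : slI F I p hpI hpI') : slJ F J :=
  ⟨(x : Module.End F (J →₀ F)), ((mem_slI_iff I p hpI hpI' x).mp x.2).1⟩

end SLI

section AUX

open scoped Classical

variable {F : Type*} [Field F] {J : Type*}

/-- The matrix unit `E i j`. -/
noncomputable def Eu (F : Type*) [Field F] {J : Type*} (i j : J) :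
    Module.End F (J →₀ F) :=
  (Finsupp.lsingle i).comp (Finsupp.lapply j)

lemma Eu_apply (i j : J) (v : J →₀ F) : Eu F i j v = Finsupp.single i (v j) := rfl

lemma Eu_single (i j a : J) (b : F) :
    Eu F i j (Finsupp.single a b) = if a = j then Finsupp.single i b else 0 := by
  rw [Eu_apply, Finsupp.single_apply]
  split_ifs <;> simp

lemma Eu_mul (i j k l : J) :
    (Eu F i j) * (Eu F k l) = if j = k then Eu F i l else 0 := by
  by_cases h2 : j = k
  · subst h2
    rw [if_pos rfl]
    refine Finsupp.lhom_ext fun a b => ?_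
    rw [Module.End.mul_apply, Eu_apply, Eu_apply, Finsupp.single_eq_same, Eu_apply]
  · rw [if_neg h2]
    refine Finsupp.lhom_ext fun a b => ?_
    rw [Module.End.mul_apply, Eu_apply, Eu_apply,
      Finsupp.single_apply, if_neg (fun h : k = j => h2 h.symm)]
    simp

lemma finitary_Eu (i j : J) : Finitary F (Eu F i j) := by
  refine Set.Finite.subset (Set.finite_singleton (i, j)) fun q hq => ?_
  simp only [Set.mem_setOf_eq, Eu_single] at hq
  by_cases h : q.2 = j
  · rw [if_pos h] at hq
    have : q.1 = i := by
      by_contra hne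
      exact hq (Finsupp.single_eq_of_ne' (Ne.symm hne))
    simp [Set.mem_singleton_iff, Prod.ext_iff, this, h]
  · rw [if_neg h] at hq
    simp at hq

lemma trF_Eu_ne {i j : J} (h : i ≠ j) : trF F (Eu F i j) = 0 := by
  unfold trF
  refine finsum_eq_zero_of_forall_eq_zero fun k => ?_
  rw [Eu_single]
  split_ifs with hk
  · rw [Finsupp.single_apply, if_neg (fun hik : i = k => h (hik.trans hk))]
  · simp

lemma trF_Eu_diag (i : J) : trF F (Eu F i i) = (1 : F) := by
  unfold trF
  rw [finsum_eq_single _ i]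
  · rw [Eu_single, if_pos rfl, Finsupp.single_eq_same]
  · intro k hk
    rw [Eu_single, if_neg hk]
    simp

lemma Eu_mem_slJ {i j : J} (h : i ≠ j) : Eu F i j ∈ slJ F J :=
  ⟨finitary_Eu i j, trF_Eu_ne h⟩

lemma Hu_mem_slJ (i j : J) : Eu F i i - Eu F j j ∈ slJ F J := by
  refine ⟨(finitary_Eu i i).sub (finitary_Eu j j), ?_⟩
  rw [trF_sub (finitary_Eu i i) (finitary_Eu j j), trF_Eu_diag, trF_Eu_diag, sub_self]

variable (I : Set J) (p : Module.End F (J →₀ F))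
variable (hpI : ∀ j ∈ I, p (Finsupp.single j 1) = Finsupp.single j 1)
variable (hpI' : ∀ j ∉ I, p (Finsupp.single j 1) = 0)

include hpI hpI' in
lemma finitary_p (hIfin : I.Finite) : Finitary F p := by
  refine Set.Finite.subset (hIfin.image fun j => (j, j)) fun q hq => ?_
  simp only [Set.mem_setOf_eq] at hq
  by_cases h : q.2 ∈ I
  · rw [hpI q.2 h] at hq
    have : q.1 = q.2 := by
      by_contra hne
      exact hq (Finsupp.single_eq_of_ne' (Ne.symm hne))
    exact ⟨q.2, h, by rw [Prod.ext_iff]; exact ⟨this.symm, rfl⟩⟩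
  · rw [hpI' q.2 h] at hq
    simp at hq

include hpI hpI' in
lemma p_apply_outside {i : J} (hi : i ∉ I) (v : J →₀ F) : p v i = 0 := by
  rw [end_apply_eq_sum p v, Finset.sum_apply']
  refine Finset.sum_eq_zero fun k _ => ?_
  by_cases hk : k ∈ I
  · rw [hpI k hk, Finsupp.smul_apply, Finsupp.single_apply,
      if_neg (fun h : k = i => hi (h ▸ hk)), smul_zero]
  · rw [hpI' k hk]
    simp

include hpI hpI' in
lemma p_Eu_p {i j : J} (hi : i ∈ I) (hj : j ∈ I) : p * Eu F i j * p = Eu F i j := by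
  refine Finsupp.lhom_ext fun a b => ?_
  have hb : (Finsupp.single a b : J →₀ F) = b • Finsupp.single a 1 :=
    (Finsupp.smul_single_one a b).symm
  rw [hb, map_smul, map_smul]
  congr 1
  rw [Module.End.mul_apply, Module.End.mul_apply]
  by_cases ha : a ∈ I
  · rw [hpI a ha, Eu_single]
    split_ifs with h
    · rw [hpI i hi]
    · rw [map_zero]
  · rw [hpI' a ha, map_zero, map_zero, Eu_single]
    rw [if_neg (fun h : a = j => ha (h ▸ hj))]

lemma pb_of_pbp {b : Module.End F (J →₀ F)} (hpp : p * p = p) (h : p * b * p = b) :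
    p * b = b := by
  conv_lhs => rw [← h]
  rw [← mul_assoc, ← mul_assoc, hpp, h]

lemma bp_of_pbp {b : Module.End F (J →₀ F)} (hpp : p * p = p) (h : p * b * p = b) :
    b * p = b := by
  conv_lhs => rw [← h]
  rw [mul_assoc, hpp, h]

lemma compress_comm_key {u b : Module.End F (J →₀ F)} (hpp : p * p = p)
    (h : p * b * p = b) :
    p * (u * b - b * u) * p = (p * u * p) * b - b * (p * u * p) := by
  have hpb := pb_of_pbp p hpp h
  have hbp := bp_of_pbp p hpp h
  rw [mul_sub p (u * b) (b * u), sub_mul (p * (u * b)) (p * (b * u)) p]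
  congr 1
  · rw [mul_assoc p (u * b) p, mul_assoc u b p, hbp, mul_assoc (p * u) p b, hpb,
      mul_assoc p u b]
  · rw [← mul_assoc p b u, hpb, mul_assoc b u p, mul_assoc p u p,
      ← mul_assoc b p (u * p), hbp]

lemma compress_comm_right {u b : Module.End F (J →₀ F)} (hpp : p * p = p)
    (hp : Finitary F p) (hu : Finitary F u) (hb : Finitary F b) (h : p * b * p = b) :
    trF F (p * (u * b - b * u) * p) = 0 := by
  rw [compress_comm_key p hpp h]
  have hq : Finitary F (p * u * p) := (hp.mul hu).mul hp
  rw [trF_sub (hq.mul hb) (hb.mul hq), trF_mul_comm hq hb, sub_self]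

lemma compress_comm_left {a v : Module.End F (J →₀ F)} (hpp : p * p = p)
    (hp : Finitary F p) (hv : Finitary F v) (ha : Finitary F a) (h : p * a * p = a) :
    trF F (p * (a * v - v * a) * p) = 0 := by
  have h1 : p * (a * v - v * a) * p = -(p * (v * a - a * v) * p) := by
    rw [mul_sub p (a * v) (v * a), sub_mul (p * (a * v)) (p * (v * a)) p,
      mul_sub p (v * a) (a * v), sub_mul (p * (v * a)) (p * (a * v)) p,
      neg_sub (p * (v * a) * p) (p * (a * v) * p)]
  rw [h1, trF_neg, compress_comm_right p hpp hp hv ha h, neg_zero]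

lemma slJ_fin (x : slJ F J) : Finitary F (x : Module.End F (J →₀ F)) := x.2.1

include hpI hpI' in
lemma trace_comp_bracket (hIfin : I.Finite) (D : LieDerivation F (slJ F J) (slJ F J))
    (a b : slJ F J) (ha : p * (a : Module.End F (J →₀ F)) * p = a)
    (hb : p * (b : Module.End F (J →₀ F)) * p = b) :
    trF F (p * ((D ⁅a, b⁆ : slJ F J) : Module.End F (J →₀ F)) * p) = 0 := by
  have hpp := proj_idempotent I p hpI hpI'
  have hp := finitary_p I p hpI hpI' hIfin
  have fa := slJ_fin a
  have fb := slJ_fin b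
  have fda := slJ_fin (D a)
  have fdb := slJ_fin (D b)
  set u : Module.End F (J →₀ F) := ((D a : slJ F J) : Module.End F (J →₀ F)) with hu
  set v : Module.End F (J →₀ F) := ((D b : slJ F J) : Module.End F (J →₀ F)) with hv
  set a' : Module.End F (J →₀ F) := ((a : slJ F J) : Module.End F (J →₀ F)) with ha'
  set b' : Module.End F (J →₀ F) := ((b : slJ F J) : Module.End F (J →₀ F)) with hb'
  rw [D.apply_lie_eq_add a b]
  have hco : ((⁅a, D b⁆ + ⁅D a, b⁆ : slJ F J) : Module.End F (J →₀ F))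
      = (u * b' - b' * u) + (a' * v - v * a') := by
    push_cast [Ring.lie_def]
    abel
  rw [hco, mul_add p (u * b' - b' * u) (a' * v - v * a'),
    add_mul (p * (u * b' - b' * u)) (p * (a' * v - v * a')) p]
  have h1 : Finitary F (p * (u * b' - b' * u) * p) :=
    (hp.mul ((fda.mul fb).sub (fb.mul fda))).mul hp
  have h2 : Finitary F (p * (a' * v - v * a') * p) :=
    (hp.mul ((fa.mul fdb).sub (fdb.mul fa))).mul hp
  rw [trF_add h1 h2,
    compress_comm_right p hpp hp fda fb hb,
    compress_comm_left p hpp hp fdb fa ha, add_zero]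

lemma finitary_finset_sum {ι : Type*} (s : Finset ι) (f : ι → Module.End F (J →₀ F))
    (hf : ∀ i ∈ s, Finitary F (f i)) : Finitary F (∑ i ∈ s, f i) := by
  classical
  induction s using Finset.induction_on with
  | empty => simpa using Finitary.zero
  | insert _ _ hnot ih =>
    rw [Finset.sum_insert hnot]
    exact (hf _ (Finset.mem_insert_self _ _)).add
      (ih fun i hi => hf i (Finset.mem_insert_of_mem hi))

lemma trF_finset_sum {ι : Type*} (s : Finset ι) (f : ι → Module.End F (J →₀ F))
    (hf : ∀ i ∈ s, Finitary F (f i)) :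
    trF F (∑ i ∈ s, f i) = ∑ i ∈ s, trF F (f i) := by
  classical
  induction s using Finset.induction_on with
  | empty => simpa using trF_zero
  | insert _ _ hnot ih =>
    rw [Finset.sum_insert hnot, Finset.sum_insert hnot,
      trF_add (hf _ (Finset.mem_insert_self _ _))
        (finitary_finset_sum _ _ fun i hi => hf i (Finset.mem_insert_of_mem hi)),
      ih fun i hi => hf i (Finset.mem_insert_of_mem hi)]

include hpI hpI' in
lemma row_outside {y : Module.End F (J →₀ F)} (hy : p * y * p = y)
    {i : J} (hi : i ∉ I) (v : J →₀ F) : y v i = 0 := by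
  conv_lhs => rw [← hy]
  rw [Module.End.mul_apply]
  exact p_apply_outside I p hpI hpI' hi _

include hpI hpI' in
lemma col_outside {y : Module.End F (J →₀ F)} (hy : p * y * p = y)
    {j : J} (hj : j ∉ I) : y (Finsupp.single j 1) = 0 := by
  conv_lhs => rw [← hy]
  rw [Module.End.mul_apply, Module.End.mul_apply, hpI' j hj, map_zero, map_zero]

include hpI hpI' in
lemma trF_eq_sum_diag (hIfin : I.Finite) {y : Module.End F (J →₀ F)}
    (hy : p * y * p = y) :
    trF F y = ∑ i ∈ hIfin.toFinset, y (Finsupp.single i 1) i := by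
  refine finsum_eq_finset_sum_of_support_subset _ fun j hj => ?_
  rw [Function.mem_support] at hj
  rw [Set.Finite.coe_toFinset]
  by_contra hjI
  exact hj (by rw [col_outside I p hpI hpI' hy hjI]; simp)

include hpI hpI' in
lemma repr_step1 (hIfin : I.Finite) {y : Module.End F (J →₀ F)}
    (hy : p * y * p = y) :
    y = ∑ i ∈ hIfin.toFinset, ∑ j ∈ hIfin.toFinset,
          (y (Finsupp.single j 1) i) • Eu F i j := by
  classical
  refine Finsupp.lhom_ext fun a b => ?_
  have hb : (Finsupp.single a b : J →₀ F) = b • Finsupp.single a 1 :=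
    (Finsupp.smul_single_one a b).symm
  rw [hb, map_smul, map_smul]
  congr 1
  ext k
  rw [LinearMap.sum_apply, Finset.sum_apply']
  have hterm : ∀ i ∈ hIfin.toFinset,
      ((∑ j ∈ hIfin.toFinset, (y (Finsupp.single j 1) i) • Eu F i j)
        (Finsupp.single a 1)) k
      = if i = k ∧ a ∈ I then y (Finsupp.single a 1) i else 0 := by
    intro i _
    rw [LinearMap.sum_apply, Finset.sum_apply']
    by_cases haI : a ∈ I
    · rw [Finset.sum_eq_single a]
      · rw [LinearMap.smul_apply, Eu_single, if_pos rfl, Finsupp.smul_apply,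
          Finsupp.single_apply, smul_eq_mul]
        by_cases hik : i = k
        · simp [hik, haI]
        · simp [hik, haI, Ne.symm hik]
      · intro j _ hja
        rw [LinearMap.smul_apply, Eu_single, if_neg (fun h : a = j => hja h.symm)]
        simp
      · intro ha
        exact absurd (hIfin.mem_toFinset.mpr haI) ha
    · rw [if_neg (by tauto)]
      refine Finset.sum_eq_zero fun j hj => ?_
      rw [LinearMap.smul_apply, Eu_single,
        if_neg (fun h : a = j => haI (by rw [h]; exact hIfin.mem_toFinset.mp hj))]
      simp
  rw [Finset.sum_congr rfl hterm]
  by_cases haI : a ∈ I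
  · simp only [haI, and_true]
    rw [Finset.sum_ite_eq' hIfin.toFinset k (fun i => y (Finsupp.single a 1) i)]
    by_cases hkI : k ∈ I
    · rw [if_pos (hIfin.mem_toFinset.mpr hkI)]
    · rw [if_neg (fun h => hkI (hIfin.mem_toFinset.mp h)),
        row_outside I p hpI hpI' hy hkI]
  · rw [col_outside I p hpI hpI' hy haI]
    simp [haI]

lemma compress_comm_key' {a v : Module.End F (J →₀ F)} (hpp : p * p = p)
    (h : p * a * p = a) :
    p * (a * v - v * a) * p = a * (p * v * p) - (p * v * p) * a := by
  have hpa := pb_of_pbp p hpp h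
  have hap := bp_of_pbp p hpp h
  rw [mul_sub p (a * v) (v * a), sub_mul (p * (a * v)) (p * (v * a)) p]
  congr 1
  · rw [← mul_assoc p a v, hpa, mul_assoc a v p, mul_assoc p v p,
      ← mul_assoc a p (v * p), hap]
  · rw [mul_assoc p (v * a) p, mul_assoc v a p, hap, ← mul_assoc p v a,
      mul_assoc (p * v) p a, hpa]

lemma compress_idem {p : Module.End F (J →₀ F)} (hpp : p * p = p)
    (g : Module.End F (J →₀ F)) : p * (p * g * p) * p = p * g * p := by
  rw [← mul_assoc p (p * g) p, ← mul_assoc p p g, hpp, mul_assoc (p * g) p p, hpp]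

/-- The compression map `g ↦ p * g * p` as a linear map. -/
noncomputable def cmprs (F : Type*) [Field F] {J : Type*} (p : Module.End F (J →₀ F)) :
    Module.End F (J →₀ F) →ₗ[F] Module.End F (J →₀ F) :=
  (LinearMap.mulRight F p).comp (LinearMap.mulLeft F p)

lemma cmprs_apply (g : Module.End F (J →₀ F)) : cmprs F p g = p * g * p := rfl

lemma end_sum_sub {ι : Type*} (s : Finset ι) (f g : ι → Module.End F (J →₀ F)) :
    ∑ i ∈ s, (f i - g i) = ∑ i ∈ s, f i - ∑ i ∈ s, g i := by
  classical
  induction s using Finset.induction_on with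
  | empty =>
    rw [Finset.sum_empty, Finset.sum_empty, Finset.sum_empty]
    exact (sub_zero (0 : Module.End F (J →₀ F))).symm
  | @insert a s' hnot ih =>
    rw [Finset.sum_insert hnot, Finset.sum_insert hnot, Finset.sum_insert hnot, ih]
    exact (add_sub_add_comm (f a) (∑ i ∈ s', f i) (g a) (∑ i ∈ s', g i)).symm

include hpI hpI' in
lemma repr_step2 (hIfin : I.Finite) {j0 : J} (hj0 : j0 ∈ I)
    {y : Module.End F (J →₀ F)} (hy0 : trF F y = 0) (hy : p * y * p = y) :
    y = ∑ i ∈ hIfin.toFinset, ∑ j ∈ hIfin.toFinset,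
          (if i = j then (y (Finsupp.single i 1) i) • (Eu F i i - Eu F j0 j0)
           else (y (Finsupp.single j 1) i) • Eu F i j) := by
  classical
  have hsplit : ∀ i j : J,
      (if i = j then (y (Finsupp.single i 1) i) • (Eu F i i - Eu F j0 j0)
       else (y (Finsupp.single j 1) i) • Eu F i j)
      = (y (Finsupp.single j 1) i) • Eu F i j
        - (if i = j then (y (Finsupp.single i 1) i) • Eu F j0 j0 else 0) := by
    intro i j
    by_cases hij : i = j
    · subst hij
      rw [if_pos rfl, if_pos rfl]
      exact smul_sub ((y (Finsupp.single i 1)) i) (Eu F i i) (Eu F j0 j0)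
    · rw [if_neg hij, if_neg hij]
      exact (sub_zero ((y (Finsupp.single j 1) i) • Eu F i j)).symm
  have E0 := Finset.sum_congr (rfl : hIfin.toFinset = hIfin.toFinset)
    fun i _ => Finset.sum_congr (rfl : hIfin.toFinset = hIfin.toFinset)
      fun j _ => hsplit i j
  rw [E0]
  have E1 := Finset.sum_congr (rfl : hIfin.toFinset = hIfin.toFinset)
    fun i (_ : i ∈ hIfin.toFinset) => end_sum_sub hIfin.toFinset
      (fun j => (y (Finsupp.single j 1) i) • Eu F i j)
      (fun j => if i = j then (y (Finsupp.single i 1) i) • Eu F j0 j0 else 0)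
  rw [E1, end_sum_sub]
  have E3 : ∑ i ∈ hIfin.toFinset, ∑ j ∈ hIfin.toFinset,
      (if i = j then (y (Finsupp.single i 1) i) • Eu F j0 j0 else 0)
      = ∑ i ∈ hIfin.toFinset, (y (Finsupp.single i 1) i) • Eu F j0 j0 :=
    Finset.sum_congr rfl fun i hi =>
      (Finset.sum_ite_eq hIfin.toFinset i
        fun _ => (y (Finsupp.single i 1) i) • Eu F j0 j0).trans (if_pos hi)
  have E4 : ∑ i ∈ hIfin.toFinset, (y (Finsupp.single i 1) i) • Eu F j0 j0
      = (∑ i ∈ hIfin.toFinset, y (Finsupp.single i 1) i) • Eu F j0 j0 :=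
    (Finset.sum_smul).symm
  have E5 : (∑ i ∈ hIfin.toFinset, y (Finsupp.single i 1) i) = 0 := by
    rw [← trF_eq_sum_diag I p hpI hpI' hIfin hy, hy0]
  rw [E3, E4, E5, zero_smul, ← repr_step1 I p hpI hpI' hIfin hy]
  exact (sub_zero y).symm

include hpI hpI' in
lemma trace_comp_D (hIfin : I.Finite) {j0 : J} (hj0 : j0 ∈ I) (h2F : (2 : F) ≠ 0)
    (D : LieDerivation F (slJ F J) (slJ F J)) (y : slJ F J)
    (hy : p * (y : Module.End F (J →₀ F)) * p = (y : Module.End F (J →₀ F))) :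
    trF F (p * ((D y : slJ F J) : Module.End F (J →₀ F)) * p) = 0 := by
  classical
  have hpp := proj_idempotent I p hpI hpI'
  have hp := finitary_p I p hpI hpI' hIfin
  set s := hIfin.toFinset with hs
  set t : J → J → slJ F J := fun i j =>
    if h : i = j then ((y : Module.End F (J →₀ F)) (Finsupp.single i 1) i) •
        (⟨Eu F i i - Eu F j0 j0, Hu_mem_slJ i j0⟩ : slJ F J)
    else ((y : Module.End F (J →₀ F)) (Finsupp.single j 1) i) •
        (⟨Eu F i j, Eu_mem_slJ h⟩ : slJ F J) with ht
  have hyt : y = ∑ i ∈ s, ∑ j ∈ s, t i j := by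
    apply Subtype.ext
    push_cast
    rw [repr_step2 I p hpI hpI' hIfin hj0 y.2.2 hy]
    refine Finset.sum_congr rfl fun i _ => Finset.sum_congr rfl fun j _ => ?_
    by_cases hij : i = j
    · subst hij
      rw [if_pos rfl]
      simp only [ht, dite_eq_ite, if_pos rfl]
      rfl
    · rw [if_neg hij]
      simp only [ht]
      rw [dif_neg hij]
      rfl
  have hDy : D y = ∑ i ∈ s, ∑ j ∈ s, D (t i j) := by
    rw [hyt, map_sum]
    exact Finset.sum_congr rfl fun i _ => map_sum D _ s
  -- the compressed trace of the derivative of any bracket with both entries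
  -- supported in `I` vanishes
  have hbrC : ∀ (a b : slJ F J),
      p * (a : Module.End F (J →₀ F)) * p = (a : Module.End F (J →₀ F)) →
      p * (b : Module.End F (J →₀ F)) * p = (b : Module.End F (J →₀ F)) →
      trF F (cmprs F p ((D ⁅a, b⁆ : slJ F J) : Module.End F (J →₀ F))) = 0 :=
    fun a b ha hb => trace_comp_bracket I p hpI hpI' hIfin D a b ha hb
  have hkey : ∀ i ∈ s, ∀ j ∈ s,
      trF F (cmprs F p ((D (t i j) : slJ F J) : Module.End F (J →₀ F))) = 0 := by
    intro i hi j hj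
    have hiI : i ∈ I := hIfin.mem_toFinset.mp hi
    have hjI : j ∈ I := hIfin.mem_toFinset.mp hj
    by_cases hij : i = j
    · subst hij
      have hti : t i i = ((y : Module.End F (J →₀ F)) (Finsupp.single i 1) i) •
          (⟨Eu F i i - Eu F j0 j0, Hu_mem_slJ i j0⟩ : slJ F J) := by
        simp [ht]
      set c : F := (y : Module.End F (J →₀ F)) (Finsupp.single i 1) i with hc
      set H : slJ F J := ⟨Eu F i i - Eu F j0 j0, Hu_mem_slJ i j0⟩ with hH
      have hsm : D (t i i) = c • D H := by rw [hti]; exact map_smul D c H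
      have hcoe : ((D (t i i) : slJ F J) : Module.End F (J →₀ F))
          = c • ((D H : slJ F J) : Module.End F (J →₀ F)) := by rw [hsm]; rfl
      rw [hcoe, map_smul (cmprs F p) c _, trF_smul]
      by_cases hij0 : i = j0
      · have hz : H = 0 := by
          apply Subtype.ext
          show Eu F i i - Eu F j0 j0 = (0 : Module.End F (J →₀ F))
          rw [hij0]
          exact sub_self (Eu F j0 j0)
        rw [hz, map_zero]
        have : ((0 : slJ F J) : Module.End F (J →₀ F)) = 0 := rfl
        rw [this, map_zero, trF_zero, mul_zero]
      · have hbr : H = ⁅(⟨Eu F i j0, Eu_mem_slJ hij0⟩ : slJ F J),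
               (⟨Eu F j0 i, Eu_mem_slJ (Ne.symm hij0)⟩ : slJ F J)⁆ := by
          apply Subtype.ext
          have : ((⁅(⟨Eu F i j0, Eu_mem_slJ hij0⟩ : slJ F J),
               (⟨Eu F j0 i, Eu_mem_slJ (Ne.symm hij0)⟩ : slJ F J)⁆ : slJ F J) :
              Module.End F (J →₀ F))
              = Eu F i j0 * Eu F j0 i - Eu F j0 i * Eu F i j0 := Ring.lie_def _ _
          rw [this, Eu_mul i j0 j0 i, Eu_mul j0 i i j0, if_pos rfl, if_pos rfl]
        rw [hbr, hbrC _ _ (p_Eu_p I p hpI hpI' hiI hj0) (p_Eu_p I p hpI hpI' hj0 hiI),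
          mul_zero]
    · have htj : t i j = ((y : Module.End F (J →₀ F)) (Finsupp.single j 1) i) •
          (⟨Eu F i j, Eu_mem_slJ hij⟩ : slJ F J) := by
        simp [ht, hij]
      set c : F := (y : Module.End F (J →₀ F)) (Finsupp.single j 1) i with hc
      set E : slJ F J := ⟨Eu F i j, Eu_mem_slJ hij⟩ with hE
      have hsm : D (t i j) = c • D E := by rw [htj]; exact map_smul D c E
      have hcoe : ((D (t i j) : slJ F J) : Module.End F (J →₀ F))
          = c • ((D E : slJ F J) : Module.End F (J →₀ F)) := by rw [hsm]; rfl
      rw [hcoe, map_smul (cmprs F p) c _, trF_smul]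
      set H : slJ F J := ⟨Eu F i i - Eu F j j, Hu_mem_slJ i j⟩ with hH
      have hE2 : E = (2⁻¹ : F) • ⁅H, E⁆ := by
        apply Subtype.ext
        have h1 : (((2⁻¹ : F) • ⁅H, E⁆ : slJ F J) : Module.End F (J →₀ F))
            = (2⁻¹ : F) • ((Eu F i i - Eu F j j) * Eu F i j
                - Eu F i j * (Eu F i i - Eu F j j)) := by
          have : ((⁅H, E⁆ : slJ F J) : Module.End F (J →₀ F))
              = (Eu F i i - Eu F j j) * Eu F i j
                - Eu F i j * (Eu F i i - Eu F j j) := Ring.lie_def _ _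
          rw [← this]; rfl
        rw [h1, sub_mul (Eu F i i) (Eu F j j) (Eu F i j),
          mul_sub (Eu F i j) (Eu F i i) (Eu F j j),
          Eu_mul i i i j, Eu_mul j j i j, Eu_mul i j i i, Eu_mul i j j j,
          if_pos rfl, if_pos rfl, if_neg (fun h : j = i => hij h.symm),
          if_neg (fun h : j = i => hij h.symm)]
        rw [sub_zero (Eu F i j), zero_sub (Eu F i j),
          sub_neg_eq_add (Eu F i j) (Eu F i j), ← two_smul F (Eu F i j),
          smul_smul, inv_mul_cancel₀ h2F, one_smul]
      have hsm2 : D E = (2⁻¹ : F) • D ⁅H, E⁆ := by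
        conv_lhs => rw [hE2]
        exact map_smul D _ _
      have hcoe2 : ((D E : slJ F J) : Module.End F (J →₀ F))
          = (2⁻¹ : F) • ((D ⁅H, E⁆ : slJ F J) : Module.End F (J →₀ F)) := by
        rw [hsm2]; rfl
      have haH : p * (Eu F i i - Eu F j j) * p = Eu F i i - Eu F j j := by
        rw [mul_sub p (Eu F i i) (Eu F j j),
          sub_mul (p * Eu F i i) (p * Eu F j j) p,
          p_Eu_p I p hpI hpI' hiI hiI, p_Eu_p I p hpI hpI' hjI hjI]
      rw [hcoe2, map_smul (cmprs F p) _ _, trF_smul,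
        hbrC H E haH (p_Eu_p I p hpI hpI' hiI hjI), mul_zero, mul_zero]
  -- put everything together
  have hfin : ∀ i ∈ s, ∀ j ∈ s,
      Finitary F (cmprs F p ((D (t i j) : slJ F J) : Module.End F (J →₀ F))) := by
    intro i _ j _
    exact (hp.mul (slJ_fin _)).mul hp
  have hcoesum : (((∑ i ∈ s, ∑ j ∈ s, D (t i j)) : slJ F J) : Module.End F (J →₀ F))
      = ∑ i ∈ s, ∑ j ∈ s, ((D (t i j) : slJ F J) : Module.End F (J →₀ F)) := by
    push_cast
    rfl
  show trF F (cmprs F p ((D y : slJ F J) : Module.End F (J →₀ F))) = 0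
  rw [hDy, hcoesum, map_sum (cmprs F p) _ s]
  rw [Finset.sum_congr rfl fun i (_ : i ∈ s) => map_sum (cmprs F p)
    (fun j => ((D (t i j) : slJ F J) : Module.End F (J →₀ F))) s]
  rw [trF_finset_sum _ _ fun i hi =>
    finitary_finset_sum _ _ fun j hj => hfin i hi j hj]
  rw [Finset.sum_congr rfl fun i hi =>
    trF_finset_sum _ _ fun j hj => hfin i hi j hj]
  rw [Finset.sum_congr rfl fun i hi => Finset.sum_congr rfl fun j hj => hkey i hi j hj]
  simp

/-- Compression of a linear self-map of `sl_J` to a linear self-map of `sl_I`. -/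
noncomputable def compressLin (G : slJ F J →ₗ[F] slJ F J)
    (hmem : ∀ x : slI F I p hpI hpI',
      p * ((G (slItoslJ F I p hpI hpI' x) : slJ F J) : Module.End F (J →₀ F)) * p
        ∈ slI F I p hpI hpI') :
    slI F I p hpI hpI' →ₗ[F] slI F I p hpI hpI' where
  toFun x := ⟨_, hmem x⟩
  map_add' x y := Subtype.ext (by
    have h1 : slItoslJ F I p hpI hpI' (x + y)
        = slItoslJ F I p hpI hpI' x + slItoslJ F I p hpI hpI' y := Subtype.ext rfl
    show cmprs F p ((G (slItoslJ F I p hpI hpI' (x + y)) : slJ F J) : Module.End F (J →₀ F))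
        = cmprs F p ((G (slItoslJ F I p hpI hpI' x) : slJ F J) : Module.End F (J →₀ F))
          + cmprs F p ((G (slItoslJ F I p hpI hpI' y) : slJ F J) : Module.End F (J →₀ F))
    rw [h1, map_add G]
    show cmprs F p (((G (slItoslJ F I p hpI hpI' x) : slJ F J) : Module.End F (J →₀ F))
        + ((G (slItoslJ F I p hpI hpI' y) : slJ F J) : Module.End F (J →₀ F))) = _
    exact map_add (cmprs F p) _ _)
  map_smul' c x := Subtype.ext (by
    have h1 : slItoslJ F I p hpI hpI' (c • x)
        = c • slItoslJ F I p hpI hpI' x := Subtype.ext rfl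
    show cmprs F p ((G (slItoslJ F I p hpI hpI' (c • x)) : slJ F J) : Module.End F (J →₀ F))
        = c • cmprs F p ((G (slItoslJ F I p hpI hpI' x) : slJ F J) : Module.End F (J →₀ F))
    rw [h1, map_smul G]
    show cmprs F p (c • ((G (slItoslJ F I p hpI hpI' x) : slJ F J) : Module.End F (J →₀ F))) = _
    exact map_smul (cmprs F p) _ _)

lemma compressLin_apply (G : slJ F J →ₗ[F] slJ F J) (hmem) (x : slI F I p hpI hpI') :
    (compressLin I p hpI hpI' G hmem x : Module.End F (J →₀ F))
      = p * ((G (slItoslJ F I p hpI hpI' x) : slJ F J) : Module.End F (J →₀ F)) * p := rfl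

end AUX

/-- Let `F` be of characteristic zero, `J` infinite, `I ⊆ J` finite with at least two
elements and let `p` be the projection onto the coordinates in `I`.  If `Δ` is a local
derivation of `sl_J(F)`, then for `x ∈ sl_I(F)` the compression `p ∘ (Δ x) ∘ p` again
lies in `sl_I(F)`, and `x ↦ p ∘ (Δ x) ∘ p` is a local derivation of `sl_I(F)`. -/
theorem compression_localDerivation_slI (F : Type*) [Field F] [CharZero F]
    (J : Type*) [Infinite J] (I : Set J) (hIfin : I.Finite) (hIcard : 2 ≤ Nat.card I)
    (p : Module.End F (J →₀ F))
    (hpI : ∀ j ∈ I, p (Finsupp.single j 1) = Finsupp.single j 1)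
    (hpI' : ∀ j ∉ I, p (Finsupp.single j 1) = 0)
    (Δ : slJ F J →ₗ[F] slJ F J)
    (hΔ : ∀ x : slJ F J, ∃ D : LieDerivation F (slJ F J) (slJ F J), Δ x = D x) :
    ∃ hmem : ∀ x : slI F I p hpI hpI',
        (p * (Δ (slItoslJ F I p hpI hpI' x) : Module.End F (J →₀ F)) * p)
          ∈ slI F I p hpI hpI',
      ∃ Φ : slI F I p hpI hpI' →ₗ[F] slI F I p hpI hpI',
        (∀ x : slI F I p hpI hpI',
          (Φ x : Module.End F (J →₀ F))
            = p * (Δ (slItoslJ F I p hpI hpI' x) : Module.End F (J →₀ F)) * p) ∧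
        ∀ x : slI F I p hpI hpI',
          ∃ D : LieDerivation F (slI F I p hpI hpI') (slI F I p hpI hpI'), Φ x = D x := by
  classical
  have hpp := proj_idempotent I p hpI hpI'
  have hp := finitary_p I p hpI hpI' hIfin
  have h2F : (2 : F) ≠ 0 := by norm_num
  obtain ⟨j0, hj0⟩ : I.Nonempty := by
    have hpos : 0 < Nat.card I := lt_of_lt_of_le (by norm_num) hIcard
    obtain ⟨⟨j0, hj0⟩⟩ := (Nat.card_pos_iff.mp hpos).1
    exact ⟨j0, hj0⟩
  -- membership of the compression, for any linear map locally given by derivations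
  have hDmem : ∀ (D : LieDerivation F (slJ F J) (slJ F J)) (x : slI F I p hpI hpI'),
      p * ((D (slItoslJ F I p hpI hpI' x) : slJ F J) : Module.End F (J →₀ F)) * p
        ∈ slI F I p hpI hpI' := by
    intro D x
    have hx : p * ((x : Module.End F (J →₀ F))) * p = (x : Module.End F (J →₀ F)) :=
      ((mem_slI_iff I p hpI hpI' x).mp x.2).2
    exact ⟨⟨(hp.mul (slJ_fin _)).mul hp,
      trace_comp_D I p hpI hpI' hIfin hj0 h2F D (slItoslJ F I p hpI hpI' x) hx⟩,
      compress_idem hpp _⟩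
  have hmem : ∀ x : slI F I p hpI hpI',
      (p * (Δ (slItoslJ F I p hpI hpI' x) : Module.End F (J →₀ F)) * p)
        ∈ slI F I p hpI hpI' := by
    intro x
    obtain ⟨D, hD⟩ := hΔ (slItoslJ F I p hpI hpI' x)
    rw [hD]
    exact hDmem D x
  refine ⟨hmem, compressLin I p hpI hpI' Δ hmem, fun x => rfl, ?_⟩
  intro x
  obtain ⟨D, hD⟩ := hΔ (slItoslJ F I p hpI hpI' x)
  -- build the compressed derivation
  refine ⟨{ toLinearMap := compressLin I p hpI hpI' D.toLinearMap (hDmem D),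
            leibniz' := ?_ }, ?_⟩
  · intro a b
    apply Subtype.ext
    have hxa : p * ((a : Module.End F (J →₀ F))) * p = (a : Module.End F (J →₀ F)) :=
      ((mem_slI_iff I p hpI hpI' a).mp a.2).2
    have hxb : p * ((b : Module.End F (J →₀ F))) * p = (b : Module.End F (J →₀ F)) :=
      ((mem_slI_iff I p hpI hpI' b).mp b.2).2
    have hab : slItoslJ F I p hpI hpI' ⁅a, b⁆
        = ⁅slItoslJ F I p hpI hpI' a, slItoslJ F I p hpI hpI' b⁆ := Subtype.ext rfl
    set va : Module.End F (J →₀ F) :=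
      ((D (slItoslJ F I p hpI hpI' a) : slJ F J) : Module.End F (J →₀ F)) with hva
    set vb : Module.End F (J →₀ F) :=
      ((D (slItoslJ F I p hpI hpI' b) : slJ F J) : Module.End F (J →₀ F)) with hvb
    show cmprs F p ((D.toLinearMap (slItoslJ F I p hpI hpI' ⁅a, b⁆) : slJ F J) :
        Module.End F (J →₀ F)) = _
    have hco : ((D.toLinearMap (slItoslJ F I p hpI hpI' ⁅a, b⁆) : slJ F J) :
          Module.End F (J →₀ F))
        = ((a : Module.End F (J →₀ F)) * vb - vb * (a : Module.End F (J →₀ F)))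
          - ((b : Module.End F (J →₀ F)) * va - va * (b : Module.End F (J →₀ F))) := by
      have h1 : D.toLinearMap (slItoslJ F I p hpI hpI' ⁅a, b⁆)
          = ⁅slItoslJ F I p hpI hpI' a, D (slItoslJ F I p hpI hpI' b)⁆
            - ⁅slItoslJ F I p hpI hpI' b, D (slItoslJ F I p hpI hpI' a)⁆ := by
        rw [hab]
        exact D.apply_lie_eq_sub _ _
      rw [h1]
      rfl
    rw [hco, map_sub (cmprs F p) _ _]
    show (p * ((a : Module.End F (J →₀ F)) * vb - vb * (a : Module.End F (J →₀ F))) * p)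
        - (p * ((b : Module.End F (J →₀ F)) * va - va * (b : Module.End F (J →₀ F))) * p)
        = _
    rw [compress_comm_key' p hpp hxa, compress_comm_key' p hpp hxb]
    rfl
  · apply Subtype.ext
    show p * ((Δ (slItoslJ F I p hpI hpI' x) : slJ F J) : Module.End F (J →₀ F)) * p = _
    rw [hD]
    rfl
end

section
/- Let L be a Lie algebra over a field F admitting a bilinear form κ : L × L → F that is symmetric, nondegenerate, and invariant under all derivations of L. Then every 2-local derivation ∇ of L is additive: ∇(x + y) = ∇(x) + ∇(y) for all x, y ∈ L. -/
set_option maxHeartbeats 1000000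
set_option synthInstance.maxHeartbeats 1000000

/-- If a Lie algebra `L` over a field carries a symmetric, nondegenerate bilinear form
invariant under all derivations, then every 2-local derivation of `L` is additive. -/
theorem twoLocalDerivation_additive (F : Type*) [Field F] (L : Type*) [LieRing L]
    [LieAlgebra F L]
    (kappa : L →ₗ[F] L →ₗ[F] F)
    (hsymm : ∀ x y : L, kappa x y = kappa y x)
    (hnondeg : ∀ x : L, (∀ y : L, kappa x y = 0) → x = 0)
    (hinv : ∀ D : LieDerivation F L L, ∀ x y : L, kappa (D x) y + kappa x (D y) = 0)
    (nabla : L → L)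
    (h : ∀ x y : L, ∃ D : LieDerivation F L L, D x = nabla x ∧ D y = nabla y)
    (x y : L) : nabla (x + y) = nabla x + nabla y := by
  have key : ∀ u z : L, kappa (nabla u) z = - kappa u (nabla z) := by
    intro u z
    obtain ⟨D, hu, hz⟩ := h u z
    have := hinv D u z
    rw [hu, hz] at this
    linear_combination this
  have : ∀ z : L, kappa (nabla (x + y) - nabla x - nabla y) z = 0 := by
    intro z
    have h1 := key (x + y) z
    have h2 := key x z
    have h3 := key y z
    simp only [map_add, LinearMap.add_apply] at h1
    simp only [map_sub, LinearMap.sub_apply, h1, h2, h3]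
    ring
  have h0 := hnondeg _ this
  rw [sub_sub, sub_eq_zero] at h0
  exact h0
end

section
/- Let L be a Lie algebra over a field F admitting a bilinear form κ : L × L → F that is symmetric, nondegenerate, and invariant under all derivations of L. Then every 2-local derivation ∇ of L is F-linear, and hence ∇ is a local derivation of L. -/
set_option maxHeartbeats 1000000
set_option synthInstance.maxHeartbeats 1000000

/-- If a Lie algebra `L` over a field carries a symmetric, nondegenerate bilinear form
invariant under all derivations, then every 2-local derivation of `L` is `F`-linear, and
hence is a local derivation. -/
theorem twoLocalDerivation_isLocalDerivation (F : Type*) [Field F] (L : Type*) [LieRing L]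
    [LieAlgebra F L]
    (kappa : L →ₗ[F] L →ₗ[F] F)
    (hsymm : ∀ x y : L, kappa x y = kappa y x)
    (hnondeg : ∀ x : L, (∀ y : L, kappa x y = 0) → x = 0)
    (hinv : ∀ D : LieDerivation F L L, ∀ x y : L, kappa (D x) y + kappa x (D y) = 0)
    (nabla : L → L)
    (h : ∀ x y : L, ∃ D : LieDerivation F L L, D x = nabla x ∧ D y = nabla y) :
    ∃ Δ : L →ₗ[F] L, ⇑Δ = nabla ∧ ∀ x : L, ∃ D : LieDerivation F L L, Δ x = D x := by
  have key : ∀ x y : L, kappa (nabla x) y = - kappa x (nabla y) := by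
    intro x y
    obtain ⟨D, hx, hy⟩ := h x y
    have := hinv D x y
    rw [hx, hy] at this
    linear_combination this
  have hadd : ∀ x z : L, nabla (x + z) = nabla x + nabla z := by
    intro x z
    have h0 : nabla (x + z) - (nabla x + nabla z) = 0 := by
      apply hnondeg
      intro y
      have h1 := key (x + z) y
      have h2 := key x y
      have h3 := key z y
      have e : kappa (x + z) (nabla y) = kappa x (nabla y) + kappa z (nabla y) := by
        rw [map_add]; rfl
      simp only [map_sub, map_add, LinearMap.sub_apply, LinearMap.add_apply]
      rw [h1, h2, h3, e]; ring
    exact sub_eq_zero.mp h0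
  have hsmul : ∀ (c : F) (x : L), nabla (c • x) = c • nabla x := by
    intro c x
    have h0 : nabla (c • x) - c • nabla x = 0 := by
      apply hnondeg
      intro y
      have h1 := key (c • x) y
      have h2 := key x y
      have e : kappa (c • x) (nabla y) = c * kappa x (nabla y) := by
        rw [map_smul]; rfl
      simp only [map_sub, map_smul, LinearMap.sub_apply, LinearMap.smul_apply,
        smul_eq_mul]
      rw [h1, h2, e]; ring
    exact sub_eq_zero.mp h0
  refine ⟨{ toFun := nabla, map_add' := hadd, map_smul' := hsmul }, rfl, ?_⟩
  intro x
  obtain ⟨D, hx, -⟩ := h x x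
  exact ⟨D, hx.symm⟩
end

section
/- Let L be a Lie algebra over a field F admitting a bilinear form κ : L × L → F that is symmetric, nondegenerate, and invariant under all derivations of L, and assume in addition that every local derivation of L is a derivation. Then every 2-local derivation of L is a derivation. -/
set_option maxHeartbeats 1000000
set_option synthInstance.maxHeartbeats 1000000

/-- If a Lie algebra `L` over a field carries a symmetric, nondegenerate bilinear form
invariant under all derivations, and every local derivation of `L` is a derivation, then
every 2-local derivation of `L` is a derivation. -/
theorem twoLocalDerivation_isDerivation (F : Type*) [Field F] (L : Type*) [LieRing L]
    [LieAlgebra F L]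
    (kappa : L →ₗ[F] L →ₗ[F] F)
    (hsymm : ∀ x y : L, kappa x y = kappa y x)
    (hnondeg : ∀ x : L, (∀ y : L, kappa x y = 0) → x = 0)
    (hinv : ∀ D : LieDerivation F L L, ∀ x y : L, kappa (D x) y + kappa x (D y) = 0)
    (hlocal : ∀ Δ : L →ₗ[F] L, (∀ x : L, ∃ D : LieDerivation F L L, Δ x = D x) →
      ∃ D : LieDerivation F L L, ⇑Δ = ⇑D)
    (nabla : L → L)
    (h : ∀ x y : L, ∃ D : LieDerivation F L L, D x = nabla x ∧ D y = nabla y) :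
    ∃ D : LieDerivation F L L, ∀ x : L, nabla x = D x := by
  have key : ∀ x z : L, kappa (nabla x) z = - kappa x (nabla z) := by
    intro x z
    obtain ⟨D, hx, hz⟩ := h x z
    have := hinv D x z
    rw [hx, hz] at this
    exact eq_neg_of_add_eq_zero_left this
  have hadd : ∀ x y : L, nabla (x + y) = nabla x + nabla y := by
    intro x y
    have h0 : ∀ z : L, kappa (nabla (x + y) - (nabla x + nabla y)) z = 0 := by
      intro z
      simp [map_sub, map_add, LinearMap.sub_apply, LinearMap.add_apply, key]
      ring
    have := hnondeg _ h0
    rwa [sub_eq_zero] at this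
  have hsmul : ∀ (c : F) (x : L), nabla (c • x) = c • nabla x := by
    intro c x
    have h0 : ∀ z : L, kappa (nabla (c • x) - c • nabla x) z = 0 := by
      intro z
      simp [map_sub, map_smul, LinearMap.sub_apply, LinearMap.smul_apply, key]
    have := hnondeg _ h0
    rwa [sub_eq_zero] at this
  let Δ : L →ₗ[F] L := { toFun := nabla, map_add' := hadd, map_smul' := hsmul }
  obtain ⟨D, hD⟩ := hlocal Δ (fun x => by
    obtain ⟨E, hx, _⟩ := h x x
    exact ⟨E, hx.symm⟩)
  exact ⟨D, fun x => congrFun hD x⟩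
end
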